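/- Suppose n ≥ 1 and n·p < k ≤ n, where ε < p < 1. Then the minimum, over all feasible priors μ, of the posterior confidence P(μ,p) equals θ·f(p_l) / (θ·f(p_l) + (1−θ)·f(k/n)), and it is attained by the two-point prior μ = θ·δ_{p_l} + (1−θ)·δ_{k/n}. -/

import Mathlib

open MeasureTheory Set

/-- The Bernoulli likelihood of observing `k` failures in `n` trials. -/
noncomputable def likelihood (k n : ℕ) (x : ℝ) : ℝ := x ^ k * (1 - x) ^ (n - k)

/-- A prior (probability measure on `[0,1]`) is feasible if it assigns mass `θ`
to `[0, ε]` and full mass to `[p_l, 1]`. -/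
def Feasible (pl ε θ : ℝ) (μ : Measure ℝ) : Prop :=
  IsProbabilityMeasure μ ∧ μ (Icc 0 ε) = ENNReal.ofReal θ ∧ μ (Icc pl 1) = 1

/-- The posterior confidence `P(μ, p)` in the bound `p` after observing
`k` failures in `n` miles, with prior `μ`. -/
noncomputable def posterior (k n : ℕ) (μ : Measure ℝ) (p : ℝ) : ℝ :=
  (∫ x in Icc (0 : ℝ) p, likelihood k n x ∂μ) /
    (∫ x in Icc (0 : ℝ) 1, likelihood k n x ∂μ)

/-- The two-point prior placing mass `θ` at `x1` and mass `1 - θ` at `x3`. -/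
noncomputable def twoPoint (θ x1 x3 : ℝ) : Measure ℝ :=
  ENNReal.ofReal θ • Measure.dirac x1 + ENNReal.ofReal (1 - θ) • Measure.dirac x3

lemma lik_continuous (k n : ℕ) : Continuous (likelihood k n) := by
  unfold likelihood; fun_prop

lemma lik_nonneg (k n : ℕ) {x : ℝ} (h0 : 0 ≤ x) (h1 : x ≤ 1) : 0 ≤ likelihood k n x :=
  mul_nonneg (pow_nonneg h0 _) (pow_nonneg (by linarith) _)

lemma lik_hasDerivAt (k n : ℕ) (x : ℝ) :
    HasDerivAt (likelihood k n)
      ((k : ℝ) * x ^ (k - 1) * (1 - x) ^ (n - k)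
        + x ^ k * (((n - k : ℕ) : ℝ) * (1 - x) ^ (n - k - 1) * (-1))) x := by
  have h1 : HasDerivAt (fun y : ℝ => 1 - y) (-1) x := by
    simpa using (hasDerivAt_id x).const_sub 1
  have h2 := h1.pow (n - k)
  have h3 := (hasDerivAt_pow k x).mul h2
  rw [show likelihood k n = (fun x => x ^ k) * (fun y : ℝ => 1 - y) ^ (n - k) from by
    funext y; simp [likelihood]]
  simpa using h3

lemma lik_monotoneOn (k n : ℕ) (hk : 1 ≤ k) (hkn : k ≤ n) (hn : 1 ≤ n) :
    MonotoneOn (likelihood k n) (Icc 0 ((k:ℝ)/n)) := by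
  have hn0 : (0:ℝ) < n := by exact_mod_cast hn
  apply monotoneOn_of_deriv_nonneg (convex_Icc _ _) (lik_continuous k n).continuousOn
    (fun x _ => ((lik_hasDerivAt k n x).differentiableAt).differentiableWithinAt)
  intro x hx
  rw [interior_Icc] at hx
  rw [(lik_hasDerivAt k n x).deriv]
  rcases eq_or_lt_of_le hkn with hkeq | hklt
  · subst hkeq
    simp only [Nat.sub_self, Nat.cast_zero, pow_zero, zero_mul, mul_zero, mul_one, add_zero,
      zero_mul, mul_neg, neg_zero]
    have h1 : (0:ℝ) ≤ x ^ (k-1) := pow_nonneg hx.1.le _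
    positivity
  · have hx0 : 0 < x := hx.1
    have hx1 : x < 1 := by
      have : (k:ℝ)/n ≤ 1 := by
        rw [div_le_one hn0]; exact_mod_cast hkn
      linarith [hx.2]
    have e1 : (1 - x) ^ (n - k) = (1 - x) ^ (n - k - 1) * (1 - x) := by
      rw [← pow_succ]; congr 1; omega
    have e2 : x ^ k = x ^ (k - 1) * x := by
      rw [← pow_succ]; congr 1; omega
    rw [e1, e2]
    have hcast : ((n - k : ℕ) : ℝ) = (n:ℝ) - k := by
      push_cast [Nat.cast_sub hkn]; ring
    rw [hcast]
    have hAB : 0 ≤ x ^ (k-1) * (1 - x) ^ (n - k - 1) :=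
      mul_nonneg (pow_nonneg hx0.le _) (pow_nonneg (by linarith) _)
    have hknx : 0 ≤ (k:ℝ) - n * x := by
      have := hx.2
      rw [lt_div_iff₀ hn0] at this
      linarith
    nlinarith [mul_nonneg hAB hknx]

lemma lik_antitoneOn (k n : ℕ) (hk : 1 ≤ k) (hkn : k ≤ n) (hn : 1 ≤ n) :
    AntitoneOn (likelihood k n) (Icc ((k:ℝ)/n) 1) := by
  have hn0 : (0:ℝ) < n := by exact_mod_cast hn
  apply antitoneOn_of_deriv_nonpos (convex_Icc _ _) (lik_continuous k n).continuousOn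
    (fun x _ => ((lik_hasDerivAt k n x).differentiableAt).differentiableWithinAt)
  intro x hx
  rw [interior_Icc] at hx
  rw [(lik_hasDerivAt k n x).deriv]
  rcases eq_or_lt_of_le hkn with hkeq | hklt
  · subst hkeq
    exfalso
    have h1 : (k:ℝ)/k = 1 := div_self (by positivity)
    rw [h1] at hx
    linarith [hx.1, hx.2]
  · have hc0 : (0:ℝ) < (k:ℝ)/n := by positivity
    have hx0 : 0 < x := lt_trans hc0 hx.1
    have hx1 : x < 1 := hx.2
    have e1 : (1 - x) ^ (n - k) = (1 - x) ^ (n - k - 1) * (1 - x) := by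
      rw [← pow_succ]; congr 1; omega
    have e2 : x ^ k = x ^ (k - 1) * x := by
      rw [← pow_succ]; congr 1; omega
    rw [e1, e2]
    have hcast : ((n - k : ℕ) : ℝ) = (n:ℝ) - k := by
      push_cast [Nat.cast_sub hkn]; ring
    rw [hcast]
    have hAB : 0 ≤ x ^ (k-1) * (1 - x) ^ (n - k - 1) :=
      mul_nonneg (pow_nonneg hx0.le _) (pow_nonneg (by linarith) _)
    have hknx : (k:ℝ) - n * x ≤ 0 := by
      have := hx.1
      rw [div_lt_iff₀ hn0] at this
      linarith
    nlinarith [mul_nonneg hAB (neg_nonneg.mpr hknx)]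

lemma lik_le_mode (k n : ℕ) (hk : 1 ≤ k) (hkn : k ≤ n) (hn : 1 ≤ n) {x : ℝ}
    (hx : x ∈ Icc (0:ℝ) 1) : likelihood k n x ≤ likelihood k n ((k:ℝ)/n) := by
  have hn0 : (0:ℝ) < n := by exact_mod_cast hn
  have hc0 : (0:ℝ) ≤ (k:ℝ)/n := by positivity
  have hc1 : (k:ℝ)/n ≤ 1 := by rw [div_le_one hn0]; exact_mod_cast hkn
  rcases le_total x ((k:ℝ)/n) with h | h
  · exact lik_monotoneOn k n hk hkn hn ⟨hx.1, h⟩ ⟨hc0, le_refl _⟩ h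
  · exact lik_antitoneOn k n hk hkn hn ⟨le_refl _, hc1⟩ ⟨h, hx.2⟩ h

lemma twoPoint_setIntegral (θ x1 x3 : ℝ) (hθ0 : 0 ≤ θ) (hθ1 : θ ≤ 1)
    (g : ℝ → ℝ) (s : Set ℝ) [Decidable (x1 ∈ s)] [Decidable (x3 ∈ s)] :
    ∫ x in s, g x ∂(twoPoint θ x1 x3) =
      (if x1 ∈ s then θ * g x1 else 0) + (if x3 ∈ s then (1 - θ) * g x3 else 0) := by
  have hint : ∀ a : ℝ, Integrable g (Measure.dirac a) :=
    fun a => (integrable_const (g a)).congr (ae_eq_dirac g).symm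
  have h1 : Integrable g (((ENNReal.ofReal θ • Measure.dirac x1)).restrict s) :=
    ((hint x1).smul_measure ENNReal.ofReal_ne_top).restrict
  have h2 : Integrable g (((ENNReal.ofReal (1-θ) • Measure.dirac x3)).restrict s) :=
    ((hint x3).smul_measure ENNReal.ofReal_ne_top).restrict
  unfold twoPoint
  rw [Measure.restrict_add, integral_add_measure h1 h2, Measure.restrict_smul,
    Measure.restrict_smul, integral_smul_measure, integral_smul_measure,
    setIntegral_dirac g x1 s, setIntegral_dirac g x3 s,
    ENNReal.toReal_ofReal hθ0, ENNReal.toReal_ofReal (by linarith : (0:ℝ) ≤ 1 - θ)]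
  split_ifs <;> simp [smul_eq_mul]

lemma twoPoint_apply (θ x1 x3 : ℝ) (s : Set ℝ) (hs : MeasurableSet s)
    [Decidable (x1 ∈ s)] [Decidable (x3 ∈ s)] :
    twoPoint θ x1 x3 s =
      (if x1 ∈ s then ENNReal.ofReal θ else 0) +
        (if x3 ∈ s then ENNReal.ofReal (1 - θ) else 0) := by
  unfold twoPoint
  rw [Measure.add_apply, Measure.smul_apply, Measure.smul_apply,
    Measure.dirac_apply' _ hs, Measure.dirac_apply' _ hs]
  split_ifs <;> simp [indicator_apply, *]

theorem stmt_6 (k n : ℕ) (hkn : k ≤ n) (hn : 1 ≤ n) (pl ε θ p : ℝ)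
    (hpl : 0 < pl) (hple : pl < ε) (hε1 : ε < 1)
    (hθ0 : 0 < θ) (hθ1 : θ ≤ 1)
    (hk1 : (n : ℝ) * p < k) (hεp : ε < p) (hp1 : p < 1) :
    IsLeast {y : ℝ | ∃ μ : Measure ℝ, Feasible pl ε θ μ ∧ posterior k n μ p = y}
        (θ * likelihood k n pl /
          (θ * likelihood k n pl + (1 - θ) * likelihood k n ((k : ℝ) / n))) ∧
      Feasible pl ε θ (twoPoint θ pl ((k : ℝ) / n)) ∧
      posterior k n (twoPoint θ pl ((k : ℝ) / n)) p =
        θ * likelihood k n pl /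
          (θ * likelihood k n pl + (1 - θ) * likelihood k n ((k : ℝ) / n)) := by
  classical
  have hn0 : (0:ℝ) < n := by exact_mod_cast hn
  have hp0 : 0 < p := lt_trans (lt_trans hpl hple) hεp
  have hk0 : 1 ≤ k := by
    by_contra h
    push_neg at h
    interval_cases k
    · simp at hk1; nlinarith
  set f := likelihood k n with hf
  set c : ℝ := (k:ℝ)/n with hc
  have hpc : p < c := by rw [hc, lt_div_iff₀ hn0]; linarith
  have hc1 : c ≤ 1 := by rw [hc, div_le_one hn0]; exact_mod_cast hkn
  have hεc : ε < c := lt_trans hεp hpc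
  have hplc : pl < c := lt_trans hple hεc
  set L := f pl with hL'
  set M := f c with hM'
  have hLpos : 0 < L := by
    rw [hL', hf]
    unfold likelihood
    exact mul_pos (pow_pos hpl _) (pow_pos (by linarith) _)
  have hLM : L ≤ M := lik_le_mode k n hk0 hkn hn ⟨hpl.le, by linarith⟩
  have hMpos : 0 < M := lt_of_lt_of_le hLpos hLM
  have hθ1' : (0:ℝ) ≤ 1 - θ := by linarith
  have hDpos : 0 < θ * L + (1 - θ) * M := by nlinarith
  -- membership in Icc's
  have hplε : pl ∈ Icc (0:ℝ) ε := ⟨hpl.le, hple.le⟩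
  have hcε : c ∉ Icc (0:ℝ) ε := fun h => absurd h.2 (not_le.mpr hεc)
  have hpl1 : pl ∈ Icc pl (1:ℝ) := ⟨le_refl _, by linarith⟩
  have hc1' : c ∈ Icc pl (1:ℝ) := ⟨hplc.le, hc1⟩
  have hplp : pl ∈ Icc (0:ℝ) p := ⟨hpl.le, by linarith⟩
  have hcp : c ∉ Icc (0:ℝ) p := fun h => absurd h.2 (not_le.mpr hpc)
  have hpl01 : pl ∈ Icc (0:ℝ) (1:ℝ) := ⟨hpl.le, by linarith⟩
  have hc01 : c ∈ Icc (0:ℝ) (1:ℝ) := ⟨by positivity, hc1⟩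
  have hsum1 : ENNReal.ofReal θ + ENNReal.ofReal (1 - θ) = 1 := by
    rw [← ENNReal.ofReal_add hθ0.le hθ1']
    norm_num
  -- Part 2: Feasibility of the two-point prior
  have hfeas : Feasible pl ε θ (twoPoint θ pl c) := by
    refine ⟨⟨?_⟩, ?_, ?_⟩
    · rw [twoPoint_apply θ pl c univ MeasurableSet.univ]
      simp [hsum1]
    · rw [twoPoint_apply θ pl c _ measurableSet_Icc, if_pos hplε, if_neg hcε, add_zero]
    · rw [twoPoint_apply θ pl c _ measurableSet_Icc, if_pos hpl1, if_pos hc1', hsum1]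
  -- Part 3: posterior of twoPoint
  have hpost : posterior k n (twoPoint θ pl c) p = θ * L / (θ * L + (1 - θ) * M) := by
    unfold posterior
    rw [twoPoint_setIntegral θ pl c hθ0.le hθ1 _ _,
      twoPoint_setIntegral θ pl c hθ0.le hθ1 _ _,
      if_pos hplp, if_neg hcp, if_pos hpl01, if_pos hc01, add_zero]
  refine ⟨⟨⟨twoPoint θ pl c, hfeas, hpost⟩, ?_⟩, hfeas, hpost⟩
  -- Part 1: lower bound
  rintro y ⟨μ, ⟨hprob, hμε, hμpl⟩, rfl⟩
  haveI := hprob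
  unfold posterior
  rw [← hf]
  -- measure facts
  have hcompl : μ ((Icc pl 1)ᶜ) = 0 := by
    have h := measure_compl (measurableSet_Icc (a := pl) (b := (1:ℝ))) (measure_ne_top μ _)
    rw [hμpl, measure_univ] at h
    simpa using h
  have hIccplε : μ (Icc pl ε) = ENNReal.ofReal θ := by
    have hinter : Icc (0:ℝ) ε ∩ Icc pl 1 = Icc pl ε := by
      rw [Icc_inter_Icc, max_eq_right hpl.le, min_eq_left (by linarith : ε ≤ 1)]
    have h1 : μ (Icc (0:ℝ) ε ∩ Icc pl 1) + μ (Icc (0:ℝ) ε \ Icc pl 1) = μ (Icc (0:ℝ) ε) :=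
      measure_inter_add_diff _ measurableSet_Icc
    have h2 : μ (Icc (0:ℝ) ε \ Icc pl 1) = 0 :=
      measure_mono_null (diff_subset_compl _ _) hcompl
    rw [hinter, h2, add_zero] at h1
    rw [h1, hμε]
  have hIoc : μ (Ioc p 1) ≤ ENNReal.ofReal (1 - θ) := by
    have hsub : Ioc p 1 ⊆ (Icc (0:ℝ) ε)ᶜ := by
      intro x hx
      simp only [mem_compl_iff, mem_Icc, not_and, not_le]
      intro _
      linarith [hx.1]
    have h1 : μ ((Icc (0:ℝ) ε)ᶜ) = 1 - ENNReal.ofReal θ := by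
      rw [measure_compl measurableSet_Icc (measure_ne_top μ _), hμε, measure_univ]
    have h2 : (1:ENNReal) - ENNReal.ofReal θ = ENNReal.ofReal (1 - θ) := by
      rw [← ENNReal.ofReal_one, ← ENNReal.ofReal_sub _ hθ0.le]
    calc μ (Ioc p 1) ≤ μ ((Icc (0:ℝ) ε)ᶜ) := measure_mono hsub
      _ = ENNReal.ofReal (1 - θ) := by rw [h1, h2]
  -- integrability
  have hInt : IntegrableOn f (Icc (0:ℝ) 1) μ := (lik_continuous k n).integrableOn_Icc
  have hIntp : IntegrableOn f (Icc (0:ℝ) p) μ :=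
    hInt.mono_set (Icc_subset_Icc_right hp1.le)
  have hIntpe : IntegrableOn f (Icc pl ε) μ :=
    hInt.mono_set (Icc_subset_Icc hpl.le (by linarith))
  have hIntIoc : IntegrableOn f (Ioc p 1) μ :=
    hInt.mono_set (Ioc_subset_Icc_self.trans (Icc_subset_Icc_left hp0.le))
  set A := ∫ x in Icc (0:ℝ) p, f x ∂μ with hA'
  set B := ∫ x in Ioc p (1:ℝ), f x ∂μ with hB'
  have hsplit : ∫ x in Icc (0:ℝ) 1, f x ∂μ = A + B := by
    rw [hA', hB', ← setIntegral_union ((Iic_disjoint_Ioc le_rfl).mono Icc_subset_Iic_self le_rfl) measurableSet_Ioc hIntp hIntIoc,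
      Icc_union_Ioc_eq_Icc hp0.le hp1.le]
  have hA_lb : θ * L ≤ A := by
    have step0 : ∀ x ∈ Icc pl ε, L ≤ f x := by
      intro x hx
      exact lik_monotoneOn k n hk0 hkn hn ⟨hpl.le, hplc.le⟩
        ⟨le_trans hpl.le hx.1, le_trans hx.2 hεc.le⟩ hx.1
    calc θ * L = ∫ _x in Icc pl ε, L ∂μ := by
          rw [setIntegral_const, measureReal_def, hIccplε, ENNReal.toReal_ofReal hθ0.le, smul_eq_mul]
      _ ≤ ∫ x in Icc pl ε, f x ∂μ :=
          setIntegral_mono_on (integrable_const L) hIntpe measurableSet_Icc step0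
      _ ≤ A := by
          refine setIntegral_mono_set hIntp ?_ ?_
          · filter_upwards [ae_restrict_mem measurableSet_Icc] with x hx
            exact lik_nonneg k n hx.1 (le_trans hx.2 hp1.le)
          · exact (Icc_subset_Icc (by linarith) (by linarith)).eventuallyLE
  have hB_nn : 0 ≤ B :=
    setIntegral_nonneg measurableSet_Ioc
      (fun x hx => lik_nonneg k n (le_trans hp0.le hx.1.le) hx.2)
  have hB_ub : B ≤ (1 - θ) * M := by
    calc B ≤ ∫ _x in Ioc p (1:ℝ), M ∂μ :=
          setIntegral_mono_on hIntIoc (integrable_const M) measurableSet_Ioc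
            (fun x hx => lik_le_mode k n hk0 hkn hn ⟨le_trans hp0.le hx.1.le, hx.2⟩)
      _ = (μ (Ioc p 1)).toReal * M := by rw [setIntegral_const, smul_eq_mul, measureReal_def]
      _ ≤ (1 - θ) * M := by
          refine mul_le_mul_of_nonneg_right ?_ hMpos.le
          calc (μ (Ioc p 1)).toReal ≤ (ENNReal.ofReal (1 - θ)).toReal :=
                ENNReal.toReal_mono ENNReal.ofReal_ne_top hIoc
            _ = 1 - θ := ENNReal.toReal_ofReal hθ1'
  clear_value f c L M A B
  have hA_pos : 0 < A := lt_of_lt_of_le (mul_pos hθ0 hLpos) hA_lb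
  rw [hsplit]
  have h1 : A / (A + (1 - θ) * M) ≤ A / (A + B) :=
    div_le_div_of_nonneg_left hA_pos.le (by linarith) (by linarith)
  have h2 : θ * L / (θ * L + (1 - θ) * M) ≤ A / (A + (1 - θ) * M) := by
    rw [div_le_div_iff₀ hDpos (by linarith [mul_nonneg hθ1' hMpos.le])]
    linarith [mul_le_mul_of_nonneg_right hA_lb (mul_nonneg hθ1' hMpos.le)]
  exact le_trans h2 h1
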